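/- arXiv:1211.3881 — 2 statements merged into one kernel-verified Lean document; each statement's English description precedes it below -/
import Mathlib

section
/- Let (Ω, ℱ, P) be a probability space, Θ ⊆ ℝ an open interval, and 𝓡 a nonempty finite set. For each R ∈ 𝓡 let F_R : Θ × Ω → ℝ be measurable in ω, and let 𝐑 : Θ × Ω → 𝓡 be measurable in ω for each θ. Define F(θ,ω) = Σ_{R∈𝓡} 1_{{𝐑(θ,ω)=R}} F_R(θ,ω). Assume for each R ∈ 𝓡: (i) F_R is integrable at some point of Θ, for every θ ∈ Θ the derivative ∂F_R(θ,ω)/∂θ exists at θ for P-almost every ω, and there is λ_R : Ω → ℝ with E[λ_R] < ∞ such that |F_R(θ₁,ω) − F_R(θ₂,ω)| ≤ λ_R(ω)|θ₁ − θ₂| almost surely for all θ₁, θ₂ ∈ Θ; (ii) for every θ ∈ Θ, the pair (F_R(θ,·), ∂F_R(θ,·)/∂θ) is independent of the random element 𝐑(θ,·); (iii) for every θ ∈ Θ and R ∈ 𝓡, the function Φ(θ,R) = P{𝐑(θ,·) = R} is continuously differentiable in θ and Φ(θ,R) > 0. Then for every θ₀ ∈ Θ, the function θ ↦ E[F(θ,·)]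 is differentiable at θ₀ and its derivative equals E[G(θ₀,·)], where G(θ₀,ω) = (∂/∂θ F_{𝐑(θ₀,ω)}(θ,ω))|_{θ=θ₀} + F_{𝐑(θ₀,ω)}(θ₀,ω) · Ψ(θ₀, 𝐑(θ₀,ω)) and Ψ(θ,R) = ∂/∂θ ln Φ(θ,R). -/
open scoped Classical
open MeasureTheory ProbabilityTheory
open Filter Topology

/-- **Theorem 2 (unbiased score-function-corrected gradient estimate).**
`Θ = (a,b)` is an open interval, `ℛ` a nonempty finite set (of routing tables),
`F R` the performance criterion under the fixed routing table `R`, `RT θ` the random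
routing table, `F(θ,ω) = Σ_R 1_{RT(θ,ω)=R} F_R(θ,ω)`.  Under (i) the Lipschitz
dominated-differentiability conditions on each `F_R`, (ii) independence of
`(F_R(θ,·), ∂F_R(θ,·)/∂θ)` from `RT(θ,·)`, and (iii) positivity and continuous
differentiability of `Φ(θ,R) = P{RT(θ,·)=R}`, the map `θ ↦ E[F(θ,·)]` is differentiable
at every `θ₀ ∈ Θ` with derivative `E[G(θ₀,·)]`, where
`G(θ₀,ω) = ∂F_{RT(θ₀,ω)}(θ₀,ω)/∂θ + F_{RT(θ₀,ω)}(θ₀,ω) · ∂(ln Φ(θ,RT(θ₀,ω)))/∂θ|_{θ₀}`. -/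
theorem unbiased_gradient_estimate
    {Ω : Type*} [MeasurableSpace Ω] (P : Measure Ω) [IsProbabilityMeasure P]
    (a b : ℝ) (Θ : Set ℝ) (hΘ : Θ = Set.Ioo a b)
    (ℛ : Type*) [Fintype ℛ] [Nonempty ℛ] [MeasurableSpace ℛ]
    [MeasurableSingletonClass ℛ]
    (F : ℛ → ℝ → Ω → ℝ) (RT : ℝ → Ω → ℛ)
    (hFmeas : ∀ R, ∀ θ ∈ Θ, Measurable (F R θ))
    (hRTmeas : ∀ θ ∈ Θ, Measurable (RT θ))
    -- (i) integrability at some point, a.s. differentiability, Lipschitz domination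
    (hFint : ∀ R, ∃ θ ∈ Θ, Integrable (F R θ) P)
    (hdiff : ∀ R, ∀ θ ∈ Θ, ∀ᵐ ω ∂P, DifferentiableAt ℝ (fun t => F R t ω) θ)
    (hLip : ∀ R, ∃ lam : Ω → ℝ, Integrable lam P ∧
      ∀ θ₁ ∈ Θ, ∀ θ₂ ∈ Θ,
        ∀ᵐ ω ∂P, |F R θ₁ ω - F R θ₂ ω| ≤ lam ω * |θ₁ - θ₂|)
    -- (ii) independence of (F_R(θ,·), ∂F_R(θ,·)/∂θ) from RT(θ,·)
    (hindep : ∀ R, ∀ θ ∈ Θ,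
      IndepFun (fun ω => (F R θ ω, deriv (fun t => F R t ω) θ)) (RT θ) P)
    -- (iii) Φ(θ,R) is continuously differentiable and positive on Θ
    (Φ : ℝ → ℛ → ℝ) (hΦ : ∀ θ R, Φ θ R = (P {ω | RT θ ω = R}).toReal)
    (hΦdiff : ∀ R, ∀ θ ∈ Θ, ContDiffAt ℝ 1 (fun t => Φ t R) θ)
    (hΦpos : ∀ R, ∀ θ ∈ Θ, 0 < Φ θ R) :
    ∀ θ₀ ∈ Θ,
      HasDerivAt
        (fun θ => ∫ ω, ∑ R : ℛ, (if RT θ ω = R then F R θ ω else 0) ∂P)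
        (∫ ω, (deriv (fun t => F (RT θ₀ ω) t ω) θ₀
            + F (RT θ₀ ω) θ₀ ω
              * deriv (fun t => Real.log (Φ t (RT θ₀ ω))) θ₀) ∂P)
        θ₀ := by
  
  intro θ₀ hθ₀
  classical
  have hΘopen : IsOpen Θ := hΘ ▸ isOpen_Ioo
  have hΘnhds : Θ ∈ 𝓝 θ₀ := hΘopen.mem_nhds hθ₀
  choose lam hlamint hlam using hLip
  set D : ℛ → Ω → ℝ := fun R ω => deriv (fun t => F R t ω) θ₀ with hDdef
  -- integrability on Θ
  have hInt : ∀ R, ∀ θ ∈ Θ, Integrable (F R θ) P := by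
    intro R θ hθ
    obtain ⟨θ₁, hθ₁, hint⟩ := hFint R
    refine Integrable.mono' (hint.norm.add ((hlamint R).mul_const |θ - θ₁|))
      ((hFmeas R θ hθ).aestronglyMeasurable) ?_
    filter_upwards [hlam R θ hθ θ₁ hθ₁] with ω hω
    have h1 : |F R θ ω| - |F R θ₁ ω| ≤ |F R θ ω - F R θ₁ ω| := abs_sub_abs_le_abs_sub _ _
    simp only [Real.norm_eq_abs, Pi.add_apply]
    linarith
  -- a sequence in Θ tending to θ₀ from the right
  have hab : θ₀ ∈ Set.Ioo a b := hΘ ▸ hθ₀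
  set d : ℕ → ℝ := fun n => (b - θ₀) / (n + 2) with hddef
  have hdpos : ∀ n, 0 < d n := fun n => div_pos (by linarith [hab.2]) (by positivity)
  have hdmem : ∀ n, θ₀ + d n ∈ Θ := by
    intro n
    rw [hΘ]
    have hlt : d n < b - θ₀ := by
      rw [hddef]
      exact div_lt_self (by linarith [hab.2]) (by have h : (0:ℝ) ≤ (n:ℝ) := Nat.cast_nonneg n; linarith)
    exact ⟨by linarith [hab.1, hdpos n], by linarith⟩
  have hdlim : Tendsto d atTop (𝓝 0) := by
    have h2 : Tendsto (fun n : ℕ => ((n : ℝ) + 2)) atTop atTop :=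
      tendsto_atTop_add_const_right _ 2 tendsto_natCast_atTop_atTop
    have := h2.inv_tendsto_atTop.const_mul (b - θ₀)
    simpa [hddef, div_eq_mul_inv, Function.comp] using this
  have hseq : Tendsto (fun n => θ₀ + d n) atTop (𝓝[≠] θ₀) := by
    apply tendsto_nhdsWithin_of_tendsto_nhds_of_eventually_within
    · simpa using tendsto_const_nhds.add hdlim
    · exact Eventually.of_forall fun n => by simp [(hdpos n).ne']
  -- sequential difference quotients
  have hq_tendsto : ∀ R, ∀ᵐ ω ∂P,
      Tendsto (fun n => (F R (θ₀ + d n) ω - F R θ₀ ω) / d n) atTop (𝓝 (D R ω)) := by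
    intro R
    filter_upwards [hdiff R θ₀ hθ₀] with ω hω
    have h1 : Tendsto (slope (fun t => F R t ω) θ₀) (𝓝[≠] θ₀) (𝓝 (D R ω)) :=
      hasDerivAt_iff_tendsto_slope.mp hω.hasDerivAt
    have := h1.comp hseq
    convert this using 2 with n
    simp [Function.comp, slope_def_field]
  have hDaesm : ∀ R, AEStronglyMeasurable (D R) P := by
    intro R
    refine aestronglyMeasurable_of_tendsto_ae atTop
      (fun n => (Measurable.aestronglyMeasurable ?_)) (hq_tendsto R)
    exact ((hFmeas R _ (hdmem n)).sub (hFmeas R θ₀ hθ₀)).div_const _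
  have hDbound : ∀ R, ∀ᵐ ω ∂P, ‖D R ω‖ ≤ lam R ω := by
    intro R
    filter_upwards [hq_tendsto R, ae_all_iff.2 fun n => hlam R (θ₀ + d n) (hdmem n) θ₀ hθ₀]
      with ω hω hω2
    refine le_of_tendsto hω.norm (Eventually.of_forall fun n => ?_)
    have h2 := hω2 n
    have h3 : |θ₀ + d n - θ₀| = d n := by
      rw [add_sub_cancel_left, abs_of_pos (hdpos n)]
    rw [Real.norm_eq_abs, abs_div, abs_of_pos (hdpos n), div_le_iff₀ (hdpos n)]
    rw [h3] at h2
    exact h2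
  have hDint : ∀ R, Integrable (D R) P := fun R => (hlamint R).mono' (hDaesm R) (hDbound R)
  -- derivative of θ ↦ ∫ F R θ
  have hgderiv : ∀ R, HasDerivAt (fun θ => ∫ ω, F R θ ω ∂P) (∫ ω, D R ω ∂P) θ₀ := by
    intro R
    rw [hasDerivAt_iff_tendsto_slope]
    have key : Tendsto (fun x => ∫ ω, slope (fun t => F R t ω) θ₀ x ∂P) (𝓝[≠] θ₀)
        (𝓝 (∫ ω, D R ω ∂P)) := by
      apply tendsto_integral_filter_of_dominated_convergence (lam R)
      · filter_upwards [mem_nhdsWithin_of_mem_nhds hΘnhds] with x hx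
        apply Measurable.aestronglyMeasurable
        simp only [slope_def_field]
        exact ((hFmeas R x hx).sub (hFmeas R θ₀ hθ₀)).div_const _
      · filter_upwards [mem_nhdsWithin_of_mem_nhds hΘnhds, self_mem_nhdsWithin]
          with x hx hx'
        filter_upwards [hlam R x hx θ₀ hθ₀] with ω hω
        have hxne : x - θ₀ ≠ 0 := sub_ne_zero.2 hx'
        rw [slope_def_field, Real.norm_eq_abs, abs_div, div_le_iff₀ (abs_pos.2 hxne)]
        exact hω
      · exact hlamint R
      · filter_upwards [hdiff R θ₀ hθ₀] with ω hω
        exact hasDerivAt_iff_tendsto_slope.mp hω.hasDerivAt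
    refine key.congr' ?_
    filter_upwards [mem_nhdsWithin_of_mem_nhds hΘnhds] with x hx
    simp only [slope_def_field]
    rw [integral_div, integral_sub (hInt R x hx) (hInt R θ₀ hθ₀)]
  -- measurable sets
  have hs : ∀ θ ∈ Θ, ∀ R : ℛ, MeasurableSet {ω | RT θ ω = R} := by
    intro θ hθ R
    have := (hRTmeas θ hθ) (measurableSet_singleton R)
    simpa [Set.preimage] using this
  -- key independence identity
  have hkey : ∀ θ, θ ∈ Θ → ∀ (R : ℛ) (X : Ω → ℝ), Integrable X P →
      IndepFun X (RT θ) P →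
      ∫ ω, (if RT θ ω = R then X ω else 0) ∂P = Φ θ R * ∫ ω, X ω ∂P := by
    intro θ hθ R X hX hXind
    set I : Ω → ℝ := fun ω => if RT θ ω = R then 1 else 0 with hIdef
    have hφ : Measurable (fun r : ℛ => if r = R then (1 : ℝ) else 0) :=
      Measurable.ite measurableSet_eq measurable_const measurable_const
    have hImeas : Measurable I := hφ.comp (hRTmeas θ hθ)
    have hIint : Integrable I P := by
      refine (integrable_const (1 : ℝ)).mono' hImeas.aestronglyMeasurable ?_
      refine Eventually.of_forall fun ω => ?_
      by_cases h : RT θ ω = R <;> simp [hIdef, h]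
    have hIind : IndepFun X I P := hXind.comp measurable_id hφ
    have heq : (fun ω => if RT θ ω = R then X ω else 0) = X * I := by
      funext ω
      rw [hIdef]
      by_cases h : RT θ ω = R <;> simp [h]
    have hIval : ∫ ω, I ω ∂P = Φ θ R := by
      have h1 : ∀ ω, I ω = Set.indicator {ω | RT θ ω = R} (fun _ => (1 : ℝ)) ω := by
        intro ω
        rw [hIdef]
        simp [Set.indicator_apply, Set.mem_setOf_eq]
      rw [hΦ]
      calc ∫ ω, I ω ∂P = ∫ ω, Set.indicator {ω | RT θ ω = R} (fun _ => (1:ℝ)) ω ∂P := by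
            exact integral_congr_ae (Eventually.of_forall h1)
        _ = ∫ _ in {ω | RT θ ω = R}, (1:ℝ) ∂P := integral_indicator (hs θ hθ R)
        _ = (P {ω | RT θ ω = R}).toReal := by simp; rfl
    calc ∫ ω, (if RT θ ω = R then X ω else 0) ∂P = ∫ ω, (X * I) ω ∂P := by rw [heq]
      _ = (∫ ω, X ω ∂P) * ∫ ω, I ω ∂P := hIind.integral_mul_eq_mul_integral hX.aestronglyMeasurable hIint.aestronglyMeasurable
      _ = Φ θ R * ∫ ω, X ω ∂P := by rw [hIval]; ring
  -- independence instances
  have hFind : ∀ θ, θ ∈ Θ → ∀ R : ℛ, IndepFun (F R θ) (RT θ) P := by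
    intro θ hθ R
    have := (hindep R θ hθ).comp measurable_fst measurable_id
    exact this
  have hDind : ∀ R : ℛ, IndepFun (D R) (RT θ₀) P := by
    intro R
    have := (hindep R θ₀ hθ₀).comp measurable_snd measurable_id
    exact this
  -- term integrability
  have hterm_int : ∀ θ, θ ∈ Θ → ∀ (R : ℛ) (X : Ω → ℝ), Integrable X P →
      Integrable (fun ω => if RT θ ω = R then X ω else 0) P := by
    intro θ hθ R X hX
    refine (hX.indicator (hs θ hθ R)).congr (Eventually.of_forall fun ω => ?_)
    simp [Set.indicator_apply, Set.mem_setOf_eq]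
  -- LHS representation on Θ
  have hLHS : ∀ θ ∈ Θ,
      (∫ ω, ∑ R : ℛ, (if RT θ ω = R then F R θ ω else 0) ∂P)
        = ∑ R : ℛ, Φ θ R * ∫ ω, F R θ ω ∂P := by
    intro θ hθ
    rw [integral_finset_sum _ (fun R _ => hterm_int θ hθ R (F R θ) (hInt R θ hθ))]
    exact Finset.sum_congr rfl fun R _ => hkey θ hθ R (F R θ) (hInt R θ hθ) (hFind θ hθ R)
  -- log-derivative
  set c : ℛ → ℝ := fun R => deriv (fun t => Real.log (Φ t R)) θ₀ with hcdef
  set Φ' : ℛ → ℝ := fun R => deriv (fun t => Φ t R) θ₀ with hΦ'def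
  have hΦhas : ∀ R, HasDerivAt (fun t => Φ t R) (Φ' R) θ₀ := fun R =>
    ((hΦdiff R θ₀ hθ₀).differentiableAt one_ne_zero).hasDerivAt
  have hclog : ∀ R, Φ θ₀ R * c R = Φ' R := by
    intro R
    have h2 := (hΦhas R).log (hΦpos R θ₀ hθ₀).ne'
    have h3 : c R = Φ' R / Φ θ₀ R := h2.deriv
    rw [h3, mul_comm]
    exact div_mul_cancel₀ _ (hΦpos R θ₀ hθ₀).ne'
  -- RHS computation
  have hGpoint : ∀ ω,
      deriv (fun t => F (RT θ₀ ω) t ω) θ₀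
        + F (RT θ₀ ω) θ₀ ω * deriv (fun t => Real.log (Φ t (RT θ₀ ω))) θ₀
      = ∑ R : ℛ, ((if RT θ₀ ω = R then D R ω else 0)
          + (if RT θ₀ ω = R then F R θ₀ ω else 0) * c R) := by
    intro ω
    rw [Finset.sum_add_distrib]
    simp only [ite_mul, zero_mul]
    rw [Finset.sum_ite_eq, Finset.sum_ite_eq]
    simp [hDdef, hcdef]
  have hRHS :
      (∫ ω, (deriv (fun t => F (RT θ₀ ω) t ω) θ₀
          + F (RT θ₀ ω) θ₀ ω * deriv (fun t => Real.log (Φ t (RT θ₀ ω))) θ₀) ∂P)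
        = ∑ R : ℛ, (Φ' R * (∫ ω, F R θ₀ ω ∂P) + Φ θ₀ R * ∫ ω, D R ω ∂P) := by
    rw [integral_congr_ae (Eventually.of_forall hGpoint)]
    rw [integral_finset_sum]
    swap
    · exact fun R _ => (hterm_int θ₀ hθ₀ R (D R) (hDint R)).add
        ((hterm_int θ₀ hθ₀ R (F R θ₀) (hInt R θ₀ hθ₀)).mul_const (c R))
    refine Finset.sum_congr rfl fun R _ => ?_
    rw [integral_add (hterm_int θ₀ hθ₀ R (D R) (hDint R))
      ((hterm_int θ₀ hθ₀ R (F R θ₀) (hInt R θ₀ hθ₀)).mul_const (c R))]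
    rw [integral_mul_const]
    rw [hkey θ₀ hθ₀ R (D R) (hDint R) (hDind R),
      hkey θ₀ hθ₀ R (F R θ₀) (hInt R θ₀ hθ₀) (hFind θ₀ hθ₀ R)]
    rw [← hclog R]
    ring
  -- conclude
  rw [hRHS]
  have hsum : HasDerivAt (fun θ => ∑ R : ℛ, Φ θ R * ∫ ω, F R θ ω ∂P)
      (∑ R : ℛ, (Φ' R * (∫ ω, F R θ₀ ω ∂P) + Φ θ₀ R * ∫ ω, D R ω ∂P)) θ₀ :=
    HasDerivAt.fun_sum fun R _ => (hΦhas R).mul (hgderiv R)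
  refine hsum.congr_of_eventuallyEq ?_
  filter_upwards [hΘnhds] with θ hθ
  exact hLHS θ hθ
end

section
/- Let Ω = [0,1] × [0,1] with the Lebesgue product probability measure, and for θ ∈ [0,1], ω = (ω₁, ω₂) ∈ Ω define F(θ,ω) = θ + ω₁ + 1 if ω₂ ≤ θ and F(θ,ω) = θ + ω₁ if ω₂ > θ. Then there exists no measurable function λ : Ω → [0,∞) with E[λ] < ∞ such that for all θ₁, θ₂ ∈ [0,1] one has |F(θ₁,ω) − F(θ₂,ω)| ≤ λ(ω)|θ₁ − θ₂| for almost every ω. In particular, for any θ₁, θ₂ ∈ [0,1] with θ₂ < ω₂ ≤ θ₁ it holds |F(θ₁,ω) − F(θ₂,ω)| ≥ 1. -/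
open MeasureTheory

/-- The Lebesgue probability measure on the unit square `[0,1] × [0,1]`. -/
noncomputable def unitSquare : Measure (ℝ × ℝ) :=
  (volume.restrict (Set.Icc (0 : ℝ) 1)).prod (volume.restrict (Set.Icc (0 : ℝ) 1))

/-- The performance criterion of the paper's routing example:
`F(θ,ω) = θ + ω₁ + 1` if `ω₂ ≤ θ`, and `F(θ,ω) = θ + ω₁` if `ω₂ > θ`. -/
noncomputable def Fex (θ : ℝ) (ω : ℝ × ℝ) : ℝ :=
  if ω.2 ≤ θ then θ + ω.1 + 1 else θ + ω.1

lemma fex_jump {θ₁ θ₂ : ℝ} {ω : ℝ × ℝ} (hlt : θ₂ < ω.2) (hle : ω.2 ≤ θ₁) :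
    Fex θ₁ ω - Fex θ₂ ω = θ₁ - θ₂ + 1 := by
  unfold Fex
  rw [if_pos hle, if_neg (not_le.mpr hlt)]
  ring

/-- **Failure of the Lipschitz-domination hypothesis.**  There is no integrable
nonnegative random variable `λ` such that `|F(θ₁,ω) − F(θ₂,ω)| ≤ λ(ω)|θ₁ − θ₂|`
almost surely for all `θ₁, θ₂ ∈ [0,1]`.  In particular, whenever
`θ₂ < ω₂ ≤ θ₁` one has `|F(θ₁,ω) − F(θ₂,ω)| ≥ 1`. -/
theorem lipschitz_domination_fails :
    (¬ ∃ lam : ℝ × ℝ → ℝ, Measurable lam ∧ (∀ ω, 0 ≤ lam ω) ∧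
        Integrable lam unitSquare ∧
        ∀ θ₁ ∈ Set.Icc (0 : ℝ) 1, ∀ θ₂ ∈ Set.Icc (0 : ℝ) 1,
          ∀ᵐ ω ∂unitSquare, |Fex θ₁ ω - Fex θ₂ ω| ≤ lam ω * |θ₁ - θ₂|) ∧
    (∀ θ₁ ∈ Set.Icc (0 : ℝ) 1, ∀ θ₂ ∈ Set.Icc (0 : ℝ) 1, ∀ ω : ℝ × ℝ,
      θ₂ < ω.2 → ω.2 ≤ θ₁ → 1 ≤ |Fex θ₁ ω - Fex θ₂ ω|) := by
  constructor
  · rintro ⟨lam, hmeas, hpos, hint, hLip⟩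
    -- key pointwise estimate on dyadic-type strips
    have key : ∀ n k : ℕ, 1 ≤ k → k ≤ n →
        ∀ᵐ ω ∂unitSquare,
          (((k : ℝ) - 1) / n < ω.2 → ω.2 ≤ (k : ℝ) / n → (n : ℝ) ≤ lam ω) := by
      intro n k hk hkn
      have hn : (0 : ℝ) < n := by
        exact_mod_cast Nat.lt_of_lt_of_le Nat.zero_lt_one (le_trans hk hkn)
      have hk' : (1 : ℝ) ≤ (k : ℝ) := by exact_mod_cast hk
      have hkn' : (k : ℝ) ≤ (n : ℝ) := by exact_mod_cast hkn
      have hθ₁ : (k : ℝ) / n ∈ Set.Icc (0 : ℝ) 1 := by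
        constructor
        · positivity
        · rw [div_le_one hn]; exact hkn'
      have hθ₂ : ((k : ℝ) - 1) / n ∈ Set.Icc (0 : ℝ) 1 := by
        constructor
        · apply div_nonneg (by linarith) hn.le
        · rw [div_le_one hn]; linarith
      filter_upwards [hLip ((k : ℝ) / n) hθ₁ (((k : ℝ) - 1) / n) hθ₂] with ω hω h1 h2
      rw [fex_jump h1 h2] at hω
      have hd : (k : ℝ) / n - ((k : ℝ) - 1) / n = 1 / n := by field_simp; ring
      rw [hd] at hω
      rw [abs_of_nonneg (by positivity : (0:ℝ) ≤ 1 / n + 1),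
        abs_of_pos (by positivity : (0:ℝ) < 1 / n)] at hω
      have h3 := mul_le_mul_of_nonneg_right hω hn.le
      have e1 : (1 / (n:ℝ) + 1) * n = 1 + n := by field_simp
      have e2 : lam ω * (1 / (n:ℝ)) * n = lam ω := by field_simp
      linarith
    have hall : ∀ᵐ ω ∂unitSquare, ∀ n k : ℕ, 1 ≤ k → k ≤ n →
        (((k : ℝ) - 1) / n < ω.2 → ω.2 ≤ (k : ℝ) / n → (n : ℝ) ≤ lam ω) := by
      rw [ae_all_iff]
      intro n
      rw [ae_all_iff]
      intro k
      by_cases h : 1 ≤ k ∧ k ≤ n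
      · filter_upwards [key n k h.1 h.2] with ω hω _ _
        exact hω
      · filter_upwards with ω h1 h2
        exact absurd ⟨h1, h2⟩ h
    -- the strip {ω : ω.2 ∈ (0,1)} has measure 1
    have hS : unitSquare ((Set.univ : Set ℝ) ×ˢ Set.Ioo (0 : ℝ) 1) = 1 := by
      rw [unitSquare, Measure.prod_prod]
      rw [Measure.restrict_apply_univ, Measure.restrict_apply measurableSet_Ioo,
        Set.inter_eq_self_of_subset_left Set.Ioo_subset_Icc_self,
        Real.volume_Ioo, Real.volume_Icc]
      simp
    -- extract a witness ω with ω.2 ∈ (0,1) satisfying the a.e. property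
    rw [ae_iff] at hall
    have hex : ∃ ω : ℝ × ℝ, ω ∈ (Set.univ : Set ℝ) ×ˢ Set.Ioo (0 : ℝ) 1 ∧
        ∀ n k : ℕ, 1 ≤ k → k ≤ n →
          (((k : ℝ) - 1) / n < ω.2 → ω.2 ≤ (k : ℝ) / n → (n : ℝ) ≤ lam ω) := by
      by_contra hcon
      push_neg at hcon
      have hsub : (Set.univ : Set ℝ) ×ˢ Set.Ioo (0 : ℝ) 1 ⊆
          {a | ¬ ∀ n k : ℕ, 1 ≤ k → k ≤ n →
            (((k : ℝ) - 1) / n < a.2 → a.2 ≤ (k : ℝ) / n → (n : ℝ) ≤ lam a)} := by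
        intro ω hω
        simp only [Set.mem_setOf_eq]
        intro hG
        obtain ⟨n, k, h1, h2, h3, h4, h5⟩ := hcon ω hω
        exact absurd (hG n k h1 h2 h3 h4) (not_le.mpr h5)
      have hmono := measure_mono (μ := unitSquare) hsub
      rw [hS, hall] at hmono
      exact absurd hmono (by norm_num)
    obtain ⟨ω, hωS, hG⟩ := hex
    obtain ⟨-, hω2⟩ := hωS
    obtain ⟨hω0, hω1⟩ := hω2
    -- choose n large and k = ⌈n ω₂⌉
    set n : ℕ := ⌈lam ω⌉₊ + 1 with hn_def
    have hnpos : (0:ℝ) < n := by positivity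
    have hlamlt : lam ω < n := by
      calc lam ω ≤ ⌈lam ω⌉₊ := Nat.le_ceil _
      _ < n := by exact_mod_cast Nat.lt_succ_self _
    set k : ℕ := ⌈(n:ℝ) * ω.2⌉₊ with hk_def
    have hx : (0:ℝ) < (n:ℝ) * ω.2 := mul_pos hnpos hω0
    have hk1 : 1 ≤ k := Nat.ceil_pos.mpr hx
    have hkn : k ≤ n := by
      apply Nat.ceil_le.mpr
      calc (n:ℝ) * ω.2 ≤ (n:ℝ) * 1 := by nlinarith
      _ = (n:ℝ) := mul_one _
    have hlow : ((k:ℝ) - 1) / n < ω.2 := by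
      rw [div_lt_iff₀ hnpos]
      have := Nat.ceil_lt_add_one hx.le
      rw [← hk_def] at this
      nlinarith
    have hhigh : ω.2 ≤ (k:ℝ) / n := by
      rw [le_div_iff₀ hnpos]
      have := Nat.le_ceil ((n:ℝ) * ω.2)
      rw [← hk_def] at this
      nlinarith
    exact absurd (hG n k hk1 hkn hlow hhigh) (not_le.mpr hlamlt)
  · intro θ₁ h1 θ₂ h2 ω hlt hle
    rw [fex_jump hlt hle, abs_of_nonneg (by linarith : (0:ℝ) ≤ θ₁ - θ₂ + 1)]
    linarith
end
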